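/- In the warped product M³ = J ×_{e^t} ℝ², with orthonormal frame ∂_t, e₁ = e^{-t}∂_x, e₂ = e^{-t}∂_y, the curve γ(s) = (log cosh s, ∫^s sech²u cos φ(u) du, ∫^s sech²u sin φ(u) du) (for smooth strictly increasing φ) is parametrized by arc length, has unit tangent T = tanh s ∂_t + sech s (cos φ e₁ + sin φ e₂), principal normal N = -sin φ e₁ + cos φ e₂ (which is orthogonal to ∂_t), curvature κ = φ' sech s, and torsion τ = φ' tanh s; in particular τ/κ = sinh s. -/

import Mathlib

open Real intervalIntegral

/-- Covariant derivative along the curve in the warped product M³ = J ×_{e^t} ℝ², in the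
orthonormal frame (∂_t, e₁ = e^{-t}∂_x, e₂ = e^{-t}∂_y).  If the unit tangent has frame
components (T₀, T₁, T₂) and X = a ∂_t + b e₁ + c e₂, then (using ∇_{e₁}∂_t = e₁,
∇_{e₂}∂_t = e₂, ∇_{e₁}e₁ = ∇_{e₂}e₂ = -∂_t, other frame derivatives zero):
∇_T X = (a' - T₁b - T₂c) ∂_t + (b' + T₁a) e₁ + (c' + T₂a) e₂. -/
noncomputable def covD (T₁ T₂ a b c : ℝ → ℝ) (s : ℝ) : ℝ × ℝ × ℝ :=
  (deriv a s - T₁ s * b s - T₂ s * c s, deriv b s + T₁ s * a s, deriv c s + T₂ s * a s)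

/-- In M³ = J ×_{e^t} ℝ², the curve
γ(s) = (log cosh s, ∫^s sech²u cos φ(u) du, ∫^s sech²u sin φ(u) du), for smooth strictly
increasing φ, is parametrized by arc length, has unit tangent
T = tanh s ∂_t + sech s (cos φ e₁ + sin φ e₂), principal normal N = -sin φ e₁ + cos φ e₂
(orthogonal to ∂_t), curvature κ = φ' sech s, torsion τ = φ' tanh s, and τ/κ = sinh s. -/

lemma hasDerivAt_tanh' (s : ℝ) : HasDerivAt Real.tanh (((Real.cosh s) ^ 2)⁻¹) s := by
  have hc : Real.cosh s ≠ 0 := (Real.cosh_pos s).ne'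
  have h := (Real.hasDerivAt_sinh s).div (Real.hasDerivAt_cosh s) hc
  have heq : (Real.sinh / Real.cosh) = Real.tanh := by
    funext x; rw [Pi.div_apply, Real.tanh_eq_sinh_div_cosh]
  rw [heq] at h
  refine h.congr_deriv ?_
  have := Real.cosh_sq_sub_sinh_sq s
  rw [← one_div]; congr 1
  nlinarith [this]

theorem statement19 (φ : ℝ → ℝ) (hφ : ContDiff ℝ 1 φ) (hφ' : ∀ s, 0 < deriv φ s) :
    ∀ s : ℝ,
      -- frame components of γ' : γ = (t, x, y), T₀ = t', T₁ = e^t x', T₂ = e^t y'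
      (deriv (fun u => Real.log (Real.cosh u)) s = Real.tanh s ∧
       Real.cosh s *
         deriv (fun u => ∫ v in (0:ℝ)..u, ((Real.cosh v)⁻¹) ^ 2 * Real.cos (φ v)) s
         = (Real.cosh s)⁻¹ * Real.cos (φ s) ∧
       Real.cosh s *
         deriv (fun u => ∫ v in (0:ℝ)..u, ((Real.cosh v)⁻¹) ^ 2 * Real.sin (φ v)) s
         = (Real.cosh s)⁻¹ * Real.sin (φ s)) ∧
      -- arc length: |T| = 1
      (Real.tanh s) ^ 2 + ((Real.cosh s)⁻¹ * Real.cos (φ s)) ^ 2 +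
        ((Real.cosh s)⁻¹ * Real.sin (φ s)) ^ 2 = 1 ∧
      -- ∇_T T = κ N with κ = φ' sech s and N = (0, -sin φ, cos φ) (so N ⊥ ∂_t)
      covD (fun u => (Real.cosh u)⁻¹ * Real.cos (φ u))
           (fun u => (Real.cosh u)⁻¹ * Real.sin (φ u))
           (fun u => Real.tanh u)
           (fun u => (Real.cosh u)⁻¹ * Real.cos (φ u))
           (fun u => (Real.cosh u)⁻¹ * Real.sin (φ u)) s
        = (deriv φ s * (Real.cosh s)⁻¹ * 0,
           deriv φ s * (Real.cosh s)⁻¹ * (-Real.sin (φ s)),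
           deriv φ s * (Real.cosh s)⁻¹ * Real.cos (φ s)) ∧
      -- ∇_T N = -κ T + τ B with τ = φ' tanh s and B = (sech s, -tanh s cos φ, -tanh s sin φ)
      covD (fun u => (Real.cosh u)⁻¹ * Real.cos (φ u))
           (fun u => (Real.cosh u)⁻¹ * Real.sin (φ u))
           (fun _ => (0:ℝ))
           (fun u => -Real.sin (φ u))
           (fun u => Real.cos (φ u)) s
        = (-(deriv φ s * (Real.cosh s)⁻¹) * Real.tanh s
             + deriv φ s * Real.tanh s * (Real.cosh s)⁻¹,
           -(deriv φ s * (Real.cosh s)⁻¹) * ((Real.cosh s)⁻¹ * Real.cos (φ s))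
             + deriv φ s * Real.tanh s * (-Real.tanh s * Real.cos (φ s)),
           -(deriv φ s * (Real.cosh s)⁻¹) * ((Real.cosh s)⁻¹ * Real.sin (φ s))
             + deriv φ s * Real.tanh s * (-Real.tanh s * Real.sin (φ s))) ∧
      -- ∇_T B = -τ N
      covD (fun u => (Real.cosh u)⁻¹ * Real.cos (φ u))
           (fun u => (Real.cosh u)⁻¹ * Real.sin (φ u))
           (fun u => (Real.cosh u)⁻¹)
           (fun u => -Real.tanh u * Real.cos (φ u))
           (fun u => -Real.tanh u * Real.sin (φ u)) s
        = (-(deriv φ s * Real.tanh s) * 0,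
           -(deriv φ s * Real.tanh s) * (-Real.sin (φ s)),
           -(deriv φ s * Real.tanh s) * Real.cos (φ s)) ∧
      -- ratio of torsion to curvature
      (deriv φ s * Real.tanh s) / (deriv φ s * (Real.cosh s)⁻¹) = Real.sinh s := by

  intro s
  have hc : Real.cosh s ≠ 0 := (Real.cosh_pos s).ne'
  have hφd : HasDerivAt φ (deriv φ s) s :=
    ((hφ.differentiable one_ne_zero) s).hasDerivAt
  have hcosφ : HasDerivAt (fun u => Real.cos (φ u)) (-Real.sin (φ s) * deriv φ s) s :=
    (Real.hasDerivAt_cos (φ s)).comp s hφd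
  have hsinφ : HasDerivAt (fun u => Real.sin (φ u)) (Real.cos (φ s) * deriv φ s) s :=
    (Real.hasDerivAt_sin (φ s)).comp s hφd
  have hsech : HasDerivAt (fun u => (Real.cosh u)⁻¹) (-Real.sinh s / Real.cosh s ^ 2) s :=
    (Real.hasDerivAt_cosh s).inv hc
  have htanh : HasDerivAt Real.tanh (((Real.cosh s) ^ 2)⁻¹) s := hasDerivAt_tanh' s
  have hb : HasDerivAt (fun u => (Real.cosh u)⁻¹ * Real.cos (φ u))
      (-Real.sinh s / Real.cosh s ^ 2 * Real.cos (φ s)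
        + (Real.cosh s)⁻¹ * (-Real.sin (φ s) * deriv φ s)) s := hsech.mul hcosφ
  have hc2 : HasDerivAt (fun u => (Real.cosh u)⁻¹ * Real.sin (φ u))
      (-Real.sinh s / Real.cosh s ^ 2 * Real.sin (φ s)
        + (Real.cosh s)⁻¹ * (Real.cos (φ s) * deriv φ s)) s := hsech.mul hsinφ
  have hnb : HasDerivAt (fun u => -Real.sin (φ u)) (-(Real.cos (φ s) * deriv φ s)) s := hsinφ.neg
  have hBb : HasDerivAt (fun u => -Real.tanh u * Real.cos (φ u))
      (-(((Real.cosh s) ^ 2)⁻¹) * Real.cos (φ s)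
        + -Real.tanh s * (-Real.sin (φ s) * deriv φ s)) s := htanh.neg.mul hcosφ
  have hBc : HasDerivAt (fun u => -Real.tanh u * Real.sin (φ u))
      (-(((Real.cosh s) ^ 2)⁻¹) * Real.sin (φ s)
        + -Real.tanh s * (Real.cos (φ s) * deriv φ s)) s := htanh.neg.mul hsinφ
  have hlog : HasDerivAt (fun u => Real.log (Real.cosh u)) (Real.sinh s / Real.cosh s) s :=
    (Real.hasDerivAt_cosh s).log hc
  have hfc : Continuous (fun v => ((Real.cosh v)⁻¹) ^ 2 * Real.cos (φ v)) :=
    ((Real.continuous_cosh.inv₀ fun x => (Real.cosh_pos x).ne').pow 2).mul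
      (Real.continuous_cos.comp hφ.continuous)
  have hfs : Continuous (fun v => ((Real.cosh v)⁻¹) ^ 2 * Real.sin (φ v)) :=
    ((Real.continuous_cosh.inv₀ fun x => (Real.cosh_pos x).ne').pow 2).mul
      (Real.continuous_sin.comp hφ.continuous)
  have hpy : Real.sin (φ s) ^ 2 + Real.cos (φ s) ^ 2 = 1 := Real.sin_sq_add_cos_sq (φ s)
  have hch : Real.cosh s ^ 2 - Real.sinh s ^ 2 = 1 := Real.cosh_sq_sub_sinh_sq s
  have hth : Real.tanh s = Real.sinh s / Real.cosh s := Real.tanh_eq_sinh_div_cosh s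
  refine ⟨⟨?_, ?_, ?_⟩, ?_, ?_, ?_, ?_, ?_⟩
  · rw [hlog.deriv, hth]
  · rw [hfc.deriv_integral _ 0 s]; field_simp
  · rw [hfs.deriv_integral _ 0 s]; field_simp
  · rw [hth]; field_simp; nlinarith [hpy, hch]
  · simp only [covD, htanh.deriv, hb.deriv, hc2.deriv, hth]
    refine Prod.ext ?_ (Prod.ext ?_ ?_)
    · field_simp; linear_combination (-1) * hpy
    · field_simp; ring
    · field_simp; ring
  · simp only [covD, hnb.deriv, hcosφ.deriv, deriv_const', hth]
    refine Prod.ext ?_ (Prod.ext ?_ ?_)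
    · field_simp; ring
    · field_simp
      linear_combination (-(Real.cos (φ s) * deriv φ s)) * hch
    · field_simp
      linear_combination (-(Real.sin (φ s) * deriv φ s)) * hch
  · simp only [covD, hsech.deriv, hBb.deriv, hBc.deriv, hth]
    refine Prod.ext ?_ (Prod.ext ?_ ?_)
    · field_simp; linear_combination (Real.sinh s) * hpy
    · field_simp; ring
    · field_simp; ring
  · rw [hth]
    have hd : deriv φ s ≠ 0 := (hφ' s).ne'
    field_simp
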